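/- Let L be a Lie algebra over a field k, let λ ∈ k, and let R be a Rota–Baxter operator of weight λ on L. Define x ∘ y := [R(x), y] and ⟨x, y⟩ := λ[x, y]. Then (L, ⟨,⟩, ∘) is a post-Lie algebra: ⟨,⟩ is a Lie bracket, and for all x, y, z ∈ L one has (x∘y)∘z − x∘(y∘z) − (y∘x)∘z + y∘(x∘z) = ⟨y, x⟩∘z and x∘⟨y, z⟩ = ⟨x∘y, z⟩ + ⟨y, x∘z⟩. -/
import Mathlib


/-- Any Lie algebra `L` over a field `k` with a Rota–Baxter operator `R` of weight `λ`
becomes a post-Lie algebra under `x ∘ y := [R(x), y]` and `⟨x, y⟩ := λ[x, y]`: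
`⟨,⟩` is a Lie bracket (antisymmetric and satisfying Jacobi), and the two post-Lie
identities hold. -/
theorem rb_gives_postlie (k L : Type*) [Field k] [LieRing L] [LieAlgebra k L]
    (lam : k) (R : L →ₗ[k] L)
    (hR : ∀ x y : L, ⁅R x, R y⁆ = R (⁅R x, y⁆ + ⁅x, R y⁆ + lam • ⁅x, y⁆)) :
    (∀ x y : L, lam • ⁅x, y⁆ = - (lam • ⁅y, x⁆)) ∧
    (∀ x y z : L,
      lam • ⁅lam • ⁅x, y⁆, z⁆ + lam • ⁅lam • ⁅y, z⁆, x⁆ + lam • ⁅lam • ⁅z, x⁆, y⁆ = 0) ∧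
    (∀ x y z : L,
      ⁅R ⁅R x, y⁆, z⁆ - ⁅R x, ⁅R y, z⁆⁆ - ⁅R ⁅R y, x⁆, z⁆ + ⁅R y, ⁅R x, z⁆⁆ =
        ⁅R (lam • ⁅y, x⁆), z⁆) ∧
    (∀ x y z : L,
      ⁅R x, lam • ⁅y, z⁆⁆ = lam • ⁅⁅R x, y⁆, z⁆ + lam • ⁅y, ⁅R x, z⁆⁆) := by
  refine ⟨?_, ?_, ?_, ?_⟩
  · intro x y
    rw [← lie_skew x y, smul_neg]
  · intro x y z
    simp only [smul_lie, smul_smul]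
    rw [← smul_add, ← smul_add]
    have : ⁅⁅x, y⁆, z⁆ + ⁅⁅y, z⁆, x⁆ + ⁅⁅z, x⁆, y⁆ = (0 : L) := by
      have h := lie_jacobi z x y
      rw [show (⁅⁅x, y⁆, z⁆ : L) = -⁅z, ⁅x, y⁆⁆ by rw [← lie_skew z ⁅x, y⁆, neg_neg],
        show (⁅⁅y, z⁆, x⁆ : L) = -⁅x, ⁅y, z⁆⁆ by rw [← lie_skew x ⁅y, z⁆, neg_neg],
        show (⁅⁅z, x⁆, y⁆ : L) = -⁅y, ⁅z, x⁆⁆ by rw [← lie_skew y ⁅z, x⁆, neg_neg]]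
      linear_combination (norm := abel) -h
    rw [this, smul_zero]
  · intro x y z
    have key : R ⁅R x, y⁆ - R ⁅R y, x⁆ - R (lam • ⁅y, x⁆) = ⁅R x, R y⁆ := by
      rw [hR x y]
      rw [show (⁅R y, x⁆ : L) = -⁅x, R y⁆ by rw [← lie_skew x (R y), neg_neg],
        show (lam • ⁅y, x⁆ : L) = -(lam • ⁅x, y⁆) by
          rw [show (⁅x, y⁆ : L) = -⁅y, x⁆ by rw [← lie_skew y x, neg_neg], smul_neg, neg_neg],
        map_neg, map_neg, map_add, map_add]
      abel
    have expand : ⁅R ⁅R x, y⁆, z⁆ - ⁅R ⁅R y, x⁆, z⁆ - ⁅R (lam • ⁅y, x⁆), z⁆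
        = ⁅⁅R x, R y⁆, z⁆ := by
      rw [← key]; simp only [sub_lie]
    have jac : ⁅⁅R x, R y⁆, z⁆ = ⁅R x, ⁅R y, z⁆⁆ - ⁅R y, ⁅R x, z⁆⁆ := by
      rw [lie_lie]
    linear_combination (norm := abel) expand + jac
  · intro x y z
    rw [lie_smul, leibniz_lie, smul_add]
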